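/- With χ = (1+i)/2, the operators Q(l,m) = χD(l,m) + χ*D†(l,m) are Hermitian and satisfy the orthogonality relation Tr(Q(l,m)Q(l',m')) = d·δ_{l,l'}·δ_{m,m'} for all (l,m),(l',m') in {0,...,d-1}². -/

import Mathlib

open Matrix Complex BigOperators

/-- The clock operator `Z` on `ℂ^d`: `Z|j⟩ = e^{2πij/d}|j⟩`. -/
noncomputable def Zmat (d : ℕ) : Matrix (Fin d) (Fin d) ℂ :=
  Matrix.diagonal fun j => Complex.exp (2 * (Real.pi : ℂ) * Complex.I * ((j : ℕ) : ℂ) / (d : ℂ))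

/-- The shift operator `X` on `ℂ^d`: `X|j⟩ = |j+1 mod d⟩`. -/
noncomputable def Xmat (d : ℕ) [NeZero d] : Matrix (Fin d) (Fin d) ℂ :=
  Matrix.of fun j k : Fin d => if j = k + 1 then 1 else 0

/-- Discrete Heisenberg–Weyl displacement operator `D(l,m) = Z^l X^m e^{-iπlm/d}`. -/
noncomputable def Dmat (d : ℕ) [NeZero d] (l m : ℕ) : Matrix (Fin d) (Fin d) ℂ :=
  Complex.exp (-((Real.pi : ℂ) * Complex.I * (l : ℂ) * (m : ℂ) / (d : ℂ))) • (Zmat d ^ l * Xmat d ^ m)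

/-- Heisenberg–Weyl observable `Q(l,m) = χ D(l,m) + χ* D(l,m)†` with `χ = (1+i)/2`. -/
noncomputable def Qmat (d : ℕ) [NeZero d] (l m : ℕ) : Matrix (Fin d) (Fin d) ℂ :=
  ((1 + Complex.I) / 2) • Dmat d l m + ((1 - Complex.I) / 2) • (Dmat d l m)ᴴ

open Fin.NatCast Fin.CommRing

noncomputable def ww (d : ℕ) : ℂ := Complex.exp (2 * (Real.pi : ℂ) * Complex.I / d)

lemma ww_pow_d (d : ℕ) [NeZero d] : ww d ^ d = 1 := by
  rw [ww, ← Complex.exp_nat_mul]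
  have hd : (d:ℂ) ≠ 0 := Nat.cast_ne_zero.2 (NeZero.ne d)
  rw [show (d:ℂ) * (2*(Real.pi:ℂ)*Complex.I/d) = 2*Real.pi*Complex.I by field_simp]
  exact Complex.exp_two_pi_mul_I

lemma ww_prim (d : ℕ) [NeZero d] : IsPrimitiveRoot (ww d) d :=
  Complex.isPrimitiveRoot_exp d (NeZero.ne d)

lemma ww_conj (d : ℕ) : (starRingEnd ℂ) (ww d) = (ww d)⁻¹ := by
  rw [ww, ← Complex.exp_conj, ← Complex.exp_neg]
  congr 1
  simp [map_div₀, Complex.conj_I, map_ofNat]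
  ring

lemma pow_mod_eq {z : ℂ} {d : ℕ} (hz : z ^ d = 1) (n : ℕ) : z ^ (n % d) = z ^ n := by
  conv_rhs => rw [← Nat.div_add_mod n d]
  rw [pow_add, pow_mul, hz, one_pow, one_mul]

lemma geom (d : ℕ) [NeZero d] (z : ℂ) (hz : z ^ d = 1) :
    ∑ j : Fin d, z ^ (j:ℕ) = if z = 1 then (d:ℂ) else 0 := by
  rw [Fin.sum_univ_eq_sum_range]
  split_ifs with h
  · simp [h]
  · rw [geom_sum_eq h, hz]; simp

lemma Zmat_pow (d l : ℕ) [NeZero d] :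
    Zmat d ^ l = Matrix.diagonal fun j : Fin d => ww d ^ (l * (j:ℕ)) := by
  have h : Zmat d = Matrix.diagonal fun j : Fin d => ww d ^ (j:ℕ) := by
    ext j k
    by_cases hjk : j = k
    · subst hjk
      simp only [Zmat, Matrix.diagonal_apply_eq, ww, ← Complex.exp_nat_mul]
      congr 1; ring
    · simp [Zmat, Matrix.diagonal_apply_ne _ hjk]
  rw [h, Matrix.diagonal_pow]
  ext j k
  by_cases hjk : j = k
  · subst hjk
    simp only [Matrix.diagonal_apply_eq, Pi.pow_apply, ← pow_mul]
    rw [mul_comm]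
  · simp [Matrix.diagonal_apply_ne _ hjk]

lemma Xmat_pow (d : ℕ) [NeZero d] (m : ℕ) (j k : Fin d) :
    (Xmat d ^ m) j k = if j = k + (m : Fin d) then 1 else 0 := by
  induction m generalizing k with
  | zero => simp [Matrix.one_apply]
  | succ m ih =>
    rw [pow_succ, Matrix.mul_apply, Finset.sum_eq_single (k+1)]
    · rw [ih]
      have hx : Xmat d (k+1) k = 1 := by simp [Xmat]
      rw [hx, mul_one]
      have hc : k + 1 + (m : Fin d) = k + ((m+1 : ℕ) : Fin d) := by push_cast; ring
      rw [hc]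
    · intro b _ hb
      have hx : Xmat d b k = 0 := by simp [Xmat, hb]
      rw [hx, mul_zero]
    · intro h; exact absurd (Finset.mem_univ _) h

lemma ZX_apply (d : ℕ) [NeZero d] (l m : ℕ) (j k : Fin d) :
    (Zmat d ^ l * Xmat d ^ m) j k
      = if j = k + (m:Fin d) then ww d ^ (l*(j:ℕ)) else 0 := by
  rw [Zmat_pow, Matrix.diagonal_mul, Xmat_pow]
  simp [mul_ite]


lemma ww_pow_eq_one_iff (d : ℕ) [NeZero d] (n : ℕ) : ww d ^ n = 1 ↔ d ∣ n :=
  (ww_prim d).pow_eq_one_iff_dvd n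

lemma ww_ne (d : ℕ) : ww d ≠ 0 := Complex.exp_ne_zero _

lemma trace_mul_expand {d : ℕ} (A B : Matrix (Fin d) (Fin d) ℂ) :
    Matrix.trace (A * B) = ∑ j : Fin d, ∑ k : Fin d, A j k * B k j := by
  simp [Matrix.trace, Matrix.mul_apply, Matrix.diag]

lemma trace_core_S (d : ℕ) [NeZero d] (l m l' m' : Fin d) :
    Matrix.trace ((Zmat d ^ (l:ℕ) * Xmat d ^ (m:ℕ)) * (Zmat d ^ (l':ℕ) * Xmat d ^ (m':ℕ))ᴴ)
      = if l = l' ∧ m = m' then (d:ℂ) else 0 := by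
  rw [trace_mul_expand]
  have expand : ∀ j k : Fin d,
      (Zmat d ^ (l:ℕ) * Xmat d ^ (m:ℕ)) j k * (Zmat d ^ (l':ℕ) * Xmat d ^ (m':ℕ))ᴴ k j
      = (if j = k + m then ww d ^ ((l:ℕ)*(j:ℕ)) else 0) *
          star (if j = k + m' then ww d ^ ((l':ℕ)*(j:ℕ)) else 0) := by
    intro j k
    rw [Matrix.conjTranspose_apply, ZX_apply, ZX_apply, Fin.cast_val_eq_self,
      Fin.cast_val_eq_self]
  simp only [expand]
  by_cases hm : m = m'
  · subst hm
    simp only [and_true]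
    have key : ∀ j k : Fin d,
        (if j = k + m then ww d ^ ((l:ℕ)*(j:ℕ)) else 0) *
            star (if j = k + m then ww d ^ ((l':ℕ)*(j:ℕ)) else 0)
        = if k = j - m then (ww d ^ (l:ℕ) * (ww d)⁻¹ ^ (l':ℕ)) ^ (j:ℕ) else 0 := by
      intro j k
      by_cases h : k = j - m
      · have hj : j = k + m := by rw [h]; ring
        rw [if_pos hj, if_pos hj, if_pos h, star_pow, RCLike.star_def, ww_conj,
          pow_mul, pow_mul, ← mul_pow]
      · have hj : ¬ j = k + m := fun hj => h (by rw [hj]; ring)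
        rw [if_neg hj, if_neg h, zero_mul]
    simp only [key]
    have inner : ∀ j : Fin d, (∑ k : Fin d,
        if k = j - m then (ww d ^ (l:ℕ) * (ww d)⁻¹ ^ (l':ℕ)) ^ (j:ℕ) else 0)
        = (ww d ^ (l:ℕ) * (ww d)⁻¹ ^ (l':ℕ)) ^ (j:ℕ) := by
      intro j
      rw [Finset.sum_ite_eq' Finset.univ (j - m)
        (fun _ => (ww d ^ (l:ℕ) * (ww d)⁻¹ ^ (l':ℕ)) ^ (j:ℕ))]
      simp
    simp only [inner]
    have hz : (ww d ^ (l:ℕ) * (ww d)⁻¹ ^ (l':ℕ)) ^ d = 1 := by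
      rw [mul_pow, ← pow_mul, ← pow_mul, mul_comm (l:ℕ) d, mul_comm (l':ℕ) d,
        pow_mul, pow_mul, ww_pow_d, inv_pow, ww_pow_d]
      simp
    rw [geom d _ hz]
    have hiff : (ww d ^ (l:ℕ) * (ww d)⁻¹ ^ (l':ℕ) = 1) ↔ l = l' := by
      rw [inv_pow, ← div_eq_mul_inv, div_eq_one_iff_eq (pow_ne_zero _ (ww_ne d))]
      constructor
      · intro h
        exact Fin.ext ((ww_prim d).pow_inj l.isLt l'.isLt h)
      · intro h; rw [h]
    simp only [hiff]
  · rw [if_neg (by tauto)]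
    apply Finset.sum_eq_zero
    intro j _
    apply Finset.sum_eq_zero
    intro k _
    by_cases h1 : j = k + m
    · have h2 : ¬ (j = k + m') := fun h2 => hm (add_left_cancel (h1.symm.trans h2))
      rw [if_neg h2, star_zero, mul_zero]
    · rw [if_neg h1, zero_mul]

lemma fin_add_eq_zero_iff (d : ℕ) [NeZero d] (a b : Fin d) :
    a + b = 0 ↔ d ∣ (a:ℕ) + (b:ℕ) := by
  rw [Fin.ext_iff, Fin.val_add, Fin.val_zero, Nat.dvd_iff_mod_eq_zero]

lemma trace_core_T (d : ℕ) [NeZero d] (l m l' m' : Fin d) :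
    Matrix.trace ((Zmat d ^ (l:ℕ) * Xmat d ^ (m:ℕ)) * (Zmat d ^ (l':ℕ) * Xmat d ^ (m':ℕ)))
      = if m + m' = 0 ∧ l + l' = 0 then (d:ℂ) * ww d ^ ((l':ℕ)*(m':ℕ)) else 0 := by
  rw [trace_mul_expand]
  have hpow : (ww d ^ (l':ℕ)) ^ d = 1 := by
    rw [← pow_mul, mul_comm, pow_mul, ww_pow_d, one_pow]
  have key : ∀ j k : Fin d,
      (Zmat d ^ (l:ℕ) * Xmat d ^ (m:ℕ)) j k * (Zmat d ^ (l':ℕ) * Xmat d ^ (m':ℕ)) k j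
      = if k = j + m' then
          (if m + m' = 0 then
            ww d ^ ((l:ℕ)*(j:ℕ)) * ww d ^ ((l':ℕ)*(((j + m' : Fin d)):ℕ)) else 0)
        else 0 := by
    intro j k
    rw [ZX_apply, ZX_apply, Fin.cast_val_eq_self, Fin.cast_val_eq_self]
    by_cases hk : k = j + m'
    · subst hk
      by_cases hj : j = (j + m') + m
      · have hmm : m + m' = 0 := by
          have : j + (m' + m) = j + 0 := by rw [add_zero]; rw [← add_assoc]; exact hj.symm
          have h2 := add_left_cancel this
          rw [add_comm] at h2; exact h2
        rw [if_pos hj, if_pos rfl, if_pos rfl, if_pos hmm]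
      · have hmm : ¬ (m + m' = 0) := by
          intro h
          apply hj
          rw [add_assoc, add_comm m' m, h, add_zero]
        rw [if_neg hj, if_pos rfl, if_pos rfl, if_neg hmm, zero_mul]
    · rw [if_neg hk, mul_zero, if_neg hk]
  simp only [key]
  have inner : ∀ (j : Fin d) (c : ℂ), (∑ k : Fin d, if k = j + m' then c else 0) = c := by
    intro j c
    rw [Finset.sum_ite_eq' Finset.univ (j + m') (fun _ => c)]
    simp
  simp only [inner]
  by_cases hmm : m + m' = 0
  · simp only [if_pos hmm, hmm, true_and, eq_self_iff_true, if_true]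
    have hval : ∀ j : Fin d,
        ww d ^ ((l:ℕ)*(j:ℕ)) * ww d ^ ((l':ℕ)*(((j + m' : Fin d)):ℕ))
        = (ww d ^ (l:ℕ) * ww d ^ (l':ℕ)) ^ (j:ℕ) * ww d ^ ((l':ℕ)*(m':ℕ)) := by
      intro j
      rw [pow_mul, pow_mul, Fin.val_add, pow_mod_eq hpow, pow_add, ← mul_assoc, ← mul_pow,
        ← pow_mul]
    simp only [hval]
    rw [← Finset.sum_mul]
    have hz : (ww d ^ (l:ℕ) * ww d ^ (l':ℕ)) ^ d = 1 := by
      rw [mul_pow, ← pow_mul, ← pow_mul, mul_comm (l:ℕ) d, mul_comm (l':ℕ) d,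
        pow_mul, pow_mul, ww_pow_d, one_pow, one_pow, one_mul]
    rw [geom d _ hz]
    have hiff : (ww d ^ (l:ℕ) * ww d ^ (l':ℕ) = 1) ↔ l + l' = 0 := by
      rw [← pow_add, ww_pow_eq_one_iff, fin_add_eq_zero_iff]
    by_cases hl : l + l' = 0
    · rw [if_pos (hiff.mpr hl), if_pos hl]
    · rw [if_neg (fun h => hl (hiff.mp h)), if_neg hl, zero_mul]
  · simp [hmm]


lemma trace_D_S (d : ℕ) [NeZero d] (l m l' m' : Fin d) :
    Matrix.trace (Dmat d l m * (Dmat d l' m')ᴴ) = if l = l' ∧ m = m' then (d:ℂ) else 0 := by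
  unfold Dmat
  rw [Matrix.conjTranspose_smul, smul_mul_assoc, mul_smul_comm, smul_smul,
    Matrix.trace_smul, trace_core_S, smul_eq_mul]
  by_cases h : l = l' ∧ m = m'
  · obtain ⟨h1, h2⟩ := h
    subst h1; subst h2
    rw [if_pos ⟨rfl, rfl⟩]
    have hc : Complex.exp (-((Real.pi : ℂ) * Complex.I * ((l:ℕ) : ℂ) * ((m:ℕ) : ℂ) / (d : ℂ))) *
        star (Complex.exp (-((Real.pi : ℂ) * Complex.I * ((l:ℕ) : ℂ) * ((m:ℕ) : ℂ) / (d : ℂ)))) = 1 := by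
      rw [RCLike.star_def, ← Complex.exp_conj, ← Complex.exp_add]
      rw [show (starRingEnd ℂ) (-((Real.pi : ℂ) * Complex.I * ((l:ℕ) : ℂ) * ((m:ℕ) : ℂ) / (d : ℂ)))
        = (Real.pi : ℂ) * Complex.I * ((l:ℕ) : ℂ) * ((m:ℕ) : ℂ) / (d : ℂ) by
          simp [map_div₀, Complex.conj_I, Complex.conj_ofReal, Complex.conj_natCast]; ring]
      simp
    rw [hc, one_mul]
  · rw [if_neg h, mul_zero]

lemma trace_D_T_star (d : ℕ) [NeZero d] (l m l' m' : Fin d) :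
    star (Matrix.trace (Dmat d l m * Dmat d l' m')) = Matrix.trace (Dmat d l m * Dmat d l' m') := by
  have htr : Matrix.trace (Dmat d l m * Dmat d l' m') =
      Complex.exp (-((Real.pi : ℂ) * Complex.I * ((l:ℕ) : ℂ) * ((m:ℕ) : ℂ) / (d : ℂ))) *
      Complex.exp (-((Real.pi : ℂ) * Complex.I * ((l':ℕ) : ℂ) * ((m':ℕ) : ℂ) / (d : ℂ))) *
      (if m + m' = 0 ∧ l + l' = 0 then (d:ℂ) * ww d ^ ((l':ℕ)*(m':ℕ)) else 0) := by
    unfold Dmat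
    rw [smul_mul_assoc, mul_smul_comm, smul_smul, Matrix.trace_smul, trace_core_T, smul_eq_mul]
  by_cases h : m + m' = 0 ∧ l + l' = 0
  · obtain ⟨hm, hl⟩ := h
    have hd : (d:ℂ) ≠ 0 := Nat.cast_ne_zero.2 (NeZero.ne d)
    have hdl : (d:ℤ) ∣ ((l:ℕ) : ℤ) + ((l':ℕ) : ℤ) := by
      exact_mod_cast Int.natCast_dvd_natCast.mpr ((fin_add_eq_zero_iff d l l').mp hl)
    have hdm : (d:ℤ) ∣ ((m:ℕ) : ℤ) + ((m':ℕ) : ℤ) := by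
      exact_mod_cast Int.natCast_dvd_natCast.mpr ((fin_add_eq_zero_iff d m m').mp hm)
    have hk2 : (d:ℤ) ∣ (((l':ℕ) : ℤ) * ((m':ℕ) : ℤ) - ((l:ℕ) : ℤ) * ((m:ℕ) : ℤ)) := by
      have hd2 := dvd_sub (Dvd.dvd.mul_left hdl ((m':ℕ) : ℤ)) (Dvd.dvd.mul_left hdm ((l:ℕ) : ℤ))
      have heq : (((l':ℕ) : ℤ) * ((m':ℕ) : ℤ) - ((l:ℕ) : ℤ) * ((m:ℕ) : ℤ))
          = ((m':ℕ) : ℤ) * (((l:ℕ) : ℤ) + ((l':ℕ) : ℤ)) - ((l:ℕ) : ℤ) * (((m:ℕ) : ℤ) + ((m':ℕ) : ℤ)) := by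
        ring
      rw [heq]; exact hd2
    obtain ⟨k, hk⟩ := hk2
    have hkC : ((l':ℕ) : ℂ) * ((m':ℕ) : ℂ) - ((l:ℕ) : ℂ) * ((m:ℕ) : ℂ) = (d:ℂ) * (k:ℂ) := by
      exact_mod_cast congrArg (Int.cast : ℤ → ℂ) hk
    have hval : Matrix.trace (Dmat d l m * Dmat d l' m') = (d:ℂ) * ((-1 : ℂ) ^ k) := by
      rw [htr, if_pos ⟨hm, hl⟩]
      rw [ww]
      have hexp : Complex.exp (-((Real.pi : ℂ) * Complex.I * ((l:ℕ) : ℂ) * ((m:ℕ) : ℂ) / (d : ℂ))) *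
          Complex.exp (-((Real.pi : ℂ) * Complex.I * ((l':ℕ) : ℂ) * ((m':ℕ) : ℂ) / (d : ℂ))) *
          Complex.exp ((((l':ℕ)*(m':ℕ) : ℕ) : ℂ) * (2 * (Real.pi : ℂ) * Complex.I / d)) =
          Complex.exp ((k : ℂ) * ((Real.pi : ℂ) * Complex.I)) := by
        rw [← Complex.exp_add, ← Complex.exp_add]
        congr 1
        push_cast
        field_simp
        linear_combination hkC
      calc Complex.exp (-((Real.pi : ℂ) * Complex.I * ((l:ℕ) : ℂ) * ((m:ℕ) : ℂ) / (d : ℂ))) *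
          Complex.exp (-((Real.pi : ℂ) * Complex.I * ((l':ℕ) : ℂ) * ((m':ℕ) : ℂ) / (d : ℂ))) *
          ((d:ℂ) * Complex.exp (2 * (Real.pi : ℂ) * Complex.I / d) ^ ((l':ℕ)*(m':ℕ)))
          = (d:ℂ) * (Complex.exp (-((Real.pi : ℂ) * Complex.I * ((l:ℕ) : ℂ) * ((m:ℕ) : ℂ) / (d : ℂ))) *
            Complex.exp (-((Real.pi : ℂ) * Complex.I * ((l':ℕ) : ℂ) * ((m':ℕ) : ℂ) / (d : ℂ))) *
            Complex.exp ((((l':ℕ)*(m':ℕ) : ℕ) : ℂ) * (2 * (Real.pi : ℂ) * Complex.I / d))) := by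
            rw [← Complex.exp_nat_mul]; ring
        _ = (d:ℂ) * Complex.exp ((k : ℂ) * ((Real.pi : ℂ) * Complex.I)) := by rw [hexp]
        _ = (d:ℂ) * ((-1 : ℂ) ^ k) := by rw [Complex.exp_int_mul, Complex.exp_pi_mul_I]
    rw [hval]
    rw [star_mul']
    simp [star_zpow₀]
  · rw [htr, if_neg h, mul_zero, star_zero]


/-- The Heisenberg–Weyl observables `Q(l,m)` are Hermitian and orthogonal:
`Tr(Q(l,m) Q(l',m')) = d δ_{l,l'} δ_{m,m'}`. -/
theorem HW_observables_hermitian_orthogonal (d : ℕ) [NeZero d] (l m l' m' : Fin d) :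
    (Qmat d l m).IsHermitian ∧
    Matrix.trace (Qmat d l m * Qmat d l' m') =
      if l = l' ∧ m = m' then (d : ℂ) else 0 := by
  have hchi1 : star ((1 + Complex.I)/2 : ℂ) = (1 - Complex.I)/2 := by
    rw [RCLike.star_def, map_div₀, map_add, _root_.map_one, Complex.conj_I, map_ofNat]
    ring
  have hchi2 : star ((1 - Complex.I)/2 : ℂ) = (1 + Complex.I)/2 := by
    rw [RCLike.star_def, map_div₀, map_sub, _root_.map_one, Complex.conj_I, map_ofNat]
    ring
  constructor
  · show (Qmat d l m)ᴴ = Qmat d l m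
    unfold Qmat
    rw [Matrix.conjTranspose_add, Matrix.conjTranspose_smul, Matrix.conjTranspose_smul,
      Matrix.conjTranspose_conjTranspose, hchi1, hchi2, add_comm]
  · have hexpand : Matrix.trace (Qmat d ↑l ↑m * Qmat d ↑l' ↑m') =
        ((1+Complex.I)/2)*((1+Complex.I)/2) * Matrix.trace (Dmat d ↑l ↑m * Dmat d ↑l' ↑m')
      + ((1+Complex.I)/2)*((1-Complex.I)/2) * Matrix.trace (Dmat d ↑l ↑m * (Dmat d ↑l' ↑m')ᴴ)
      + ((1-Complex.I)/2)*((1+Complex.I)/2) * Matrix.trace ((Dmat d ↑l ↑m)ᴴ * Dmat d ↑l' ↑m')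
      + ((1-Complex.I)/2)*((1-Complex.I)/2) * Matrix.trace ((Dmat d ↑l ↑m)ᴴ * (Dmat d ↑l' ↑m')ᴴ) := by
      unfold Qmat
      simp only [add_mul, mul_add, Matrix.trace_add, smul_mul_assoc, mul_smul_comm,
        smul_smul, Matrix.trace_smul, smul_eq_mul]
      ring
    have hS2 : Matrix.trace ((Dmat d ↑l ↑m)ᴴ * Dmat d ↑l' ↑m')
        = star (Matrix.trace (Dmat d ↑l ↑m * (Dmat d ↑l' ↑m')ᴴ)) := by
      rw [← Matrix.trace_conjTranspose, Matrix.conjTranspose_mul,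
        Matrix.conjTranspose_conjTranspose]
      exact Matrix.trace_mul_comm _ _
    have hT2 : Matrix.trace ((Dmat d ↑l ↑m)ᴴ * (Dmat d ↑l' ↑m')ᴴ)
        = star (Matrix.trace (Dmat d ↑l ↑m * Dmat d ↑l' ↑m')) := by
      rw [← Matrix.trace_conjTranspose, Matrix.conjTranspose_mul]
      exact Matrix.trace_mul_comm _ _
    have hSreal : star (Matrix.trace (Dmat d ↑l ↑m * (Dmat d ↑l' ↑m')ᴴ))
        = Matrix.trace (Dmat d ↑l ↑m * (Dmat d ↑l' ↑m')ᴴ) := by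
      rw [trace_D_S]
      split_ifs <;> simp
    rw [hexpand, hS2, hT2, trace_D_T_star, hSreal, trace_D_S]
    linear_combination ((Matrix.trace (Dmat d ↑l ↑m * Dmat d ↑l' ↑m')
      - (if l = l' ∧ m = m' then (d:ℂ) else 0))/2) * Complex.I_sq
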